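/- arXiv:1610.07682 — 4 statements merged into one kernel-verified Lean document; each statement's English description precedes it below -/
import Mathlib

section
/- (Effros' theorem) Let G be a Polish topological group acting continuously and transitively on a Polish space X. Then the action is micro-transitive: for every x ∈ X and every neighborhood N of the identity in G, the set N·x = {g·x : g ∈ N} is a neighborhood of x in X. -/
open Filter Set Topology

/-- Weak micro-transitivity: for a transitive continuous action of a Polish group on a
Polish space, the closure of `V • z` is a neighborhood of `z` for every `V ∈ 𝓝 1`. -/
theorem effros_spade {G X : Type*} [Group G] [TopologicalSpace G] [IsTopologicalGroup G]
    [PolishSpace G] [TopologicalSpace X] [PolishSpace X]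
    [MulAction G X] [ContinuousSMul G X]
    (htrans : ∀ x y : X, ∃ g : G, g • x = y)
    (z : X) (V : Set G) (hV : V ∈ nhds (1 : G)) :
    z ∈ interior (closure ((fun g : G => g • z) '' V)) := by
  letI := TopologicalSpace.upgradeIsCompletelyMetrizable X
  obtain ⟨W, Wopen, W1, hWW⟩ := exists_open_nhds_one_mul_subset hV
  set S : Set G := W ∩ W⁻¹ with hS
  have hSopen : IsOpen S := Wopen.inter Wopen.inv
  have hS1 : (1 : G) ∈ S := ⟨W1, by simpa using W1⟩
  have hSV : ∀ s ∈ S, ∀ t ∈ S, s⁻¹ * t ∈ V := by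
    intro s hs t ht
    exact hWW (Set.mul_mem_mul (Set.mem_inv.1 hs.2) ht.1)
  obtain ⟨D, Dcount, Ddense⟩ := TopologicalSpace.exists_countable_dense G
  haveI : Countable D := Dcount.to_subtype
  set T : Set X := (fun g : G => g • z) '' S with hT
  -- the countable family of closed sets covering X
  have hcover : (⋃ g : D, closure ((fun u : X => (g : G) • u) '' T)) = Set.univ := by
    apply Set.eq_univ_of_forall
    intro u
    obtain ⟨h, hh⟩ := htrans z u
    have hopen : IsOpen ((fun s : G => h * s) '' S⁻¹) :=
      (Homeomorph.mulLeft h).isOpen_image.2 hSopen.inv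
    have hne : ((fun s : G => h * s) '' S⁻¹).Nonempty :=
      ⟨h * 1⁻¹, ⟨1⁻¹, by simpa using hS1, rfl⟩⟩
    obtain ⟨g, hgD, hgO⟩ := Ddense.exists_mem_open hopen hne
    obtain ⟨s, hsS, hgs⟩ := hgO
    have hsS' : s⁻¹ ∈ S := by simpa using hsS
    refine Set.mem_iUnion.2 ⟨⟨g, hgD⟩, subset_closure ?_⟩
    refine ⟨s⁻¹ • z, ⟨s⁻¹, hsS', rfl⟩, ?_⟩
    show (g : G) • s⁻¹ • z = u
    have hgse : g * s⁻¹ = h := by rw [← hgs]; group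
    rw [smul_smul, hgse, hh]
  haveI : Nonempty X := ⟨z⟩
  obtain ⟨g, hg⟩ := nonempty_interior_of_iUnion_of_closed
    (fun g : D => isClosed_closure (s := (fun u : X => (g : G) • u) '' T)) hcover
  -- translate back: interior (closure T) is nonempty
  have key : (interior (closure T)).Nonempty := by
    have h1 : closure ((fun u : X => (g : G) • u) '' T)
        = (fun u : X => (g : G) • u) '' closure T :=
      ((Homeomorph.smul (g : G) (α := X)).image_closure T).symm
    have h2 : interior ((fun u : X => (g : G) • u) '' closure T)
        = (fun u : X => (g : G) • u) '' interior (closure T) :=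
      ((Homeomorph.smul (g : G) (α := X)).image_interior (closure T)).symm
    rw [h1, h2] at hg
    exact (Set.image_nonempty (f := fun u : X => (g : G) • u)).1 hg
  obtain ⟨p, hp⟩ := key
  have hpcl : p ∈ closure T := interior_subset hp
  obtain ⟨q, hqI, hqT⟩ := (mem_closure_iff.1 hpcl) (interior (closure T)) isOpen_interior hp
  obtain ⟨s, hsS, hsq⟩ := hqT
  -- now z ∈ s⁻¹ • interior (closure T) ⊆ closure (V • z)
  rw [mem_interior]
  refine ⟨(fun u : X => s⁻¹ • u) '' interior (closure T), ?_, ?_, ?_⟩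
  · -- subset of closure ((·•z) '' V)
    intro u hu
    obtain ⟨p', hp', rfl⟩ := hu
    have hp'cl : p' ∈ closure T := interior_subset hp'
    refine map_mem_closure (continuous_const_smul (s⁻¹ : G)) hp'cl ?_
    rintro v ⟨t, htS, rfl⟩
    exact ⟨s⁻¹ * t, hSV s hsS t htS, mul_smul s⁻¹ t z⟩
  · exact (Homeomorph.smul (s⁻¹ : G) (α := X)).isOpen_image.2 isOpen_interior
  · exact ⟨q, hqI, by rw [← hsq]; exact inv_smul_smul s z⟩

/-- Effros' theorem: a continuous transitive action of a Polish group
on a Polish space is micro-transitive. -/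
theorem stmt3 (G X : Type*) [Group G] [TopologicalSpace G] [IsTopologicalGroup G]
    [PolishSpace G] [TopologicalSpace X] [PolishSpace X]
    [MulAction G X] [ContinuousSMul G X]
    (htrans : ∀ x y : X, ∃ g : G, g • x = y)
    (x : X) (N : Set G) (hN : N ∈ nhds (1 : G)) :
    (fun g : G => g • x) '' N ∈ nhds x := by
  classical
  letI := TopologicalSpace.upgradeIsCompletelyMetrizable G
  set act : G → X := fun g => g • x with hact
  -- find δ such that a⁻¹ * b ∈ N whenever a, b ∈ ball 1 δ
  have hcont : ContinuousAt (fun p : G × G => p.1⁻¹ * p.2) ((1 : G), (1 : G)) :=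
    (continuous_fst.inv.mul continuous_snd).continuousAt
  have hpre : (fun p : G × G => p.1⁻¹ * p.2) ⁻¹' N ∈ nhds ((1 : G), (1 : G)) :=
    hcont.preimage_mem_nhds (by simpa using hN)
  obtain ⟨U, hU, Vb, hVb, hUV⟩ := mem_nhds_prod_iff.1 hpre
  obtain ⟨δ, hδpos, hδ⟩ := Metric.mem_nhds_iff.1 (Filter.inter_mem hU hVb)
  set ε : ℝ := δ / 2 with hε
  have hεpos : 0 < ε := by positivity
  have hεδ : ε < δ := by rw [hε]; linarith
  -- the starting neighborhood
  set W₀ : Set G := (fun w : G => (1 : G) * w) ⁻¹' Metric.ball (1 : G) (ε / 2 ^ (0 + 1))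
    with hW₀
  have hW₀open : IsOpen W₀ :=
    (Metric.isOpen_ball).preimage (continuous_const.mul continuous_id)
  have hW₀1 : (1 : G) ∈ W₀ := by
    simp [hW₀, Metric.mem_ball, hεpos]
  have hMx : x ∈ interior (closure (act '' W₀)) :=
    effros_spade htrans x W₀ (hW₀open.mem_nhds hW₀1)
  refine Filter.mem_of_superset (isOpen_interior.mem_nhds hMx) ?_
  intro y hy
  -- antitone basis of neighborhoods of y
  obtain ⟨Bas, hBas⟩ := (nhds y).exists_antitone_basis
  -- the state: (a, b, W)
  set Pp : ℕ → G × G × Set G → Prop := fun n s =>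
    IsOpen s.2.2 ∧ (1 : G) ∈ s.2.2 ∧
    (∀ w ∈ s.2.2, dist (s.2.1 * w) s.2.1 < ε / 2 ^ (n + 1)) ∧
    y ∈ closure (act '' ((fun w => (s.1⁻¹ * s.2.1) * w) '' s.2.2)) with hPp
  set Rel : ℕ → G × G × Set G → G × G × Set G → Prop := fun n s t =>
    dist t.1 s.1 < ε / 2 ^ (n + 1) ∧ dist t.2.1 s.2.1 < ε / 2 ^ (n + 1) ∧
    (s.1⁻¹ * t.2.1) • x ∈ Bas n with hRel
  -- the inductive step
  have step : ∀ n (s : G × G × Set G), Pp n s → ∃ t, Pp (n + 1) t ∧ Rel n s t := by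
    rintro n ⟨a, b, W⟩ ⟨hWo, hW1, hWd, hinv⟩
    -- the set V of allowed left increments
    set Vs : Set G := (fun v : G => a * v) ⁻¹' Metric.ball a (ε / 2 ^ (n + 1)) with hVs
    have hVsopen : IsOpen Vs :=
      (Metric.isOpen_ball).preimage (continuous_const.mul continuous_id)
    have hVs1 : (1 : G) ∈ Vs := by
      simp [hVs, Metric.mem_ball]
      positivity
    have h1 := effros_spade htrans y Vs (hVsopen.mem_nhds hVs1)
    -- first flip
    have hnhd : interior (closure ((fun g : G => g • y) '' Vs)) ∩ Bas n ∈ nhds y :=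
      Filter.inter_mem (isOpen_interior.mem_nhds h1) (hBas.1.mem_of_mem trivial)
    obtain ⟨p, ⟨hpInt, hpBas⟩, hpim⟩ := (mem_closure_iff_nhds.1 hinv) _ hnhd
    obtain ⟨w', ⟨w, hwW, rfl⟩, hpx⟩ := hpim
    -- p = ((a⁻¹ * b) * w) • x
    set s₀ : G := (a⁻¹ * b) * w with hs₀
    -- the new W
    set W' : Set G := (fun u : G => (b * w) * u) ⁻¹' Metric.ball (b * w) (ε / 2 ^ (n + 2))
      with hW'
    have hW'open : IsOpen W' :=
      (Metric.isOpen_ball).preimage (continuous_const.mul continuous_id)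
    have hW'1 : (1 : G) ∈ W' := by
      simp [hW', Metric.mem_ball]
      positivity
    have h2 := effros_spade htrans x W' (hW'open.mem_nhds hW'1)
    -- second flip : x ∈ closure ((fun v => (s₀⁻¹ * v) • y) '' Vs)
    have hx' : x ∈ closure ((fun v : G => (s₀⁻¹ * v) • y) '' Vs) := by
      have hpcl : p ∈ closure ((fun g : G => g • y) '' Vs) := interior_subset hpInt
      have : s₀⁻¹ • p ∈ closure ((fun u : X => s₀⁻¹ • u) '' ((fun g : G => g • y) '' Vs)) :=
        map_mem_closure (continuous_const_smul (s₀⁻¹ : G)) hpcl (Set.mapsTo_image _ _)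
      have hxp : s₀⁻¹ • p = x := by
        rw [← hpx]; exact inv_smul_smul s₀ x
      rw [hxp] at this
      refine closure_mono ?_ this
      rintro u ⟨u', ⟨v, hv, rfl⟩, rfl⟩
      exact ⟨v, hv, mul_smul s₀⁻¹ v y⟩
    obtain ⟨q, hqInt, hqim⟩ := (mem_closure_iff_nhds.1 hx') _ (isOpen_interior.mem_nhds h2)
    obtain ⟨v, hvVs, hq⟩ := hqim
    -- assemble the new state
    refine ⟨(a * v, b * w, W'), ⟨hW'open, hW'1, fun u hu => hu, ?_⟩, ?_, ?_, ?_⟩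
    · -- the new invariant
      have hqcl : (s₀⁻¹ * v) • y ∈ closure (act '' W') := by
        rw [show (s₀⁻¹ * v) • y = q from hq]; exact interior_subset hqInt
      have : (v⁻¹ * s₀) • ((s₀⁻¹ * v) • y)
          ∈ closure ((fun u : X => (v⁻¹ * s₀) • u) '' (act '' W')) :=
        map_mem_closure (continuous_const_smul _) hqcl (Set.mapsTo_image _ _)
      have hyy : (v⁻¹ * s₀) • ((s₀⁻¹ * v) • y) = y := by
        rw [smul_smul]
        have : v⁻¹ * s₀ * (s₀⁻¹ * v) = 1 := by group
        rw [this, one_smul]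
      rw [hyy] at this
      refine closure_mono ?_ this
      rintro u ⟨u', ⟨w'', hw'', rfl⟩, rfl⟩
      refine ⟨(((a * v)⁻¹ * (b * w)) * w''), ⟨w'', hw'', rfl⟩, ?_⟩
      show ((a * v)⁻¹ * (b * w) * w'') • x = (v⁻¹ * s₀) • w'' • x
      rw [smul_smul, hs₀]
      congr 1
      group
    · -- dist (a * v) a
      exact hvVs
    · -- dist (b * w) b
      exact hWd w hwW
    · -- Bas n membership
      have : (a⁻¹ * (b * w)) • x = p := by
        rw [← hpx, hact]
        show (a⁻¹ * (b * w)) • x = ((a⁻¹ * b) * w) • x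
        rw [mul_assoc]
      show (a⁻¹ * (b * w)) • x ∈ Bas n
      rw [this]; exact hpBas
  -- build the sequence of states
  have hPp0 : Pp 0 ((1 : G), (1 : G), W₀) := by
    refine ⟨hW₀open, hW₀1, ?_, ?_⟩
    · intro w hw; exact hw
    · have him : (fun w : G => ((1 : G)⁻¹ * 1) * w) '' W₀ = W₀ := by
        simp
      rw [him]
      exact interior_subset hy
  let F : ∀ n : ℕ, {s : G × G × Set G // Pp n s} := fun n =>
    Nat.rec ⟨((1 : G), (1 : G), W₀), hPp0⟩
      (fun n ih => ⟨(step n ih.1 ih.2).choose, (step n ih.1 ih.2).choose_spec.1⟩) n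
  have hF : ∀ n, Rel n (F n).1 (F (n + 1)).1 :=
    fun n => (step n (F n).1 (F n).2).choose_spec.2
  set a : ℕ → G := fun n => (F n).1.1 with ha
  set b : ℕ → G := fun n => (F n).1.2.1 with hb
  -- geometric bounds
  have hgeom : ∀ n : ℕ, ε / 2 ^ (n + 1) = (ε / 2) * (1 / 2) ^ n := by
    intro n
    rw [pow_succ, one_div_pow]
    ring
  have hadist : ∀ n, dist (a n) (a (n + 1)) ≤ (ε / 2) * (1 / 2) ^ n := by
    intro n
    rw [← hgeom n, dist_comm]
    exact le_of_lt (hF n).1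
  have hbdist : ∀ n, dist (b n) (b (n + 1)) ≤ (ε / 2) * (1 / 2) ^ n := by
    intro n
    rw [← hgeom n, dist_comm]
    exact le_of_lt (hF n).2.1
  have hhalf : (1 : ℝ) / 2 < 1 := by norm_num
  obtain ⟨A, hA⟩ := cauchySeq_tendsto_of_complete (cauchySeq_of_le_geometric _ _ hhalf hadist)
  obtain ⟨B, hB⟩ := cauchySeq_tendsto_of_complete (cauchySeq_of_le_geometric _ _ hhalf hbdist)
  have hAd : dist (a 0) A ≤ ε := by
    have := dist_le_of_le_geometric_of_tendsto₀ _ _ hhalf hadist hA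
    calc dist (a 0) A ≤ (ε / 2) / (1 - 1 / 2) := this
    _ = ε := by ring
  have hBd : dist (b 0) B ≤ ε := by
    have := dist_le_of_le_geometric_of_tendsto₀ _ _ hhalf hbdist hB
    calc dist (b 0) B ≤ (ε / 2) / (1 - 1 / 2) := this
    _ = ε := by ring
  have ha0 : a 0 = 1 := rfl
  have hb0 : b 0 = 1 := rfl
  -- the limit group element
  have hAN : A⁻¹ * B ∈ N := by
    have hAball : A ∈ Metric.ball (1 : G) δ := by
      rw [Metric.mem_ball]
      calc dist A 1 = dist (a 0) A := by rw [ha0, dist_comm]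
      _ ≤ ε := hAd
      _ < δ := hεδ
    have hBball : B ∈ Metric.ball (1 : G) δ := by
      rw [Metric.mem_ball]
      calc dist B 1 = dist (b 0) B := by rw [hb0, dist_comm]
      _ ≤ ε := hBd
      _ < δ := hεδ
    exact hUV (Set.mk_mem_prod (hδ hAball).1 (hδ hBball).2)
  -- convergence of s n • x to both y and (A⁻¹ * B) • x
  have hsTend : Tendsto (fun n => ((a n)⁻¹ * b (n + 1)) • x) atTop (nhds ((A⁻¹ * B) • x)) := by
    have h1 : Tendsto (fun n => (a n)⁻¹ * b (n + 1)) atTop (nhds (A⁻¹ * B)) :=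
      (hA.inv).mul (hB.comp (tendsto_add_atTop_nat 1))
    exact h1.smul_const x
  have hsTendy : Tendsto (fun n => ((a n)⁻¹ * b (n + 1)) • x) atTop (nhds y) := by
    refine hBas.tendsto ?_
    intro n
    exact (hF n).2.2
  have hfinal : (A⁻¹ * B) • x = y := tendsto_nhds_unique hsTend hsTendy
  exact ⟨A⁻¹ * B, hAN, hfinal⟩
end

section
/- Let X be a compact metric space with metric d, and let G be a closed subgroup of Homeo(X) (with the compact-open topology) acting transitively on X. Then for every ε > 0 there exists δ > 0 such that for all x, y ∈ X with d(x,y) < δ there exists φ ∈ G with φ(x) = y and sup_{z∈X} d(φ(z),z) < ε. -/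
/-- The group structure on self-homeomorphisms of a space, under composition. -/
instance homeoGroup (X : Type*) [TopologicalSpace X] : Group (X ≃ₜ X) where
  mul f g := g.trans f
  one := Homeomorph.refl X
  inv := Homeomorph.symm
  mul_assoc _ _ _ := Homeomorph.ext fun _ => rfl
  one_mul _ := Homeomorph.ext fun _ => rfl
  mul_one _ := Homeomorph.ext fun _ => rfl
  inv_mul_cancel f := Homeomorph.ext fun x => f.symm_apply_apply x

namespace Stmt4Aux
open Topology Set Metric TopologicalSpace Filter

variable {X : Type*} [MetricSpace X] [CompactSpace X]

noncomputable def cm (f : X ≃ₜ X) : C(X,X) := (f : C(X,X))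

@[simp] lemma cm_apply (f : X ≃ₜ X) (x : X) : cm f x = f x := rfl

@[simp] lemma mul_apply (f g : X ≃ₜ X) (x : X) : (f * g) x = f (g x) := rfl

@[simp] lemma inv_def (f : X ≃ₜ X) : (f⁻¹ : X ≃ₜ X) = f.symm := rfl

noncomputable def disp (f : X ≃ₜ X) : ℝ := dist (cm f) (ContinuousMap.id X)

lemma disp_nonneg (f : X ≃ₜ X) : 0 ≤ disp f := dist_nonneg

lemma dist_apply_le_disp (f : X ≃ₜ X) (x : X) : dist (f x) x ≤ disp f :=
  ContinuousMap.dist_apply_le_dist (f := cm f) (g := ContinuousMap.id X) x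

lemma disp_le {f : X ≃ₜ X} {C : ℝ} (h0 : 0 ≤ C) (h : ∀ x, dist (f x) x ≤ C) : disp f ≤ C :=
  (ContinuousMap.dist_le h0).2 h

lemma disp_lt {f : X ≃ₜ X} {C : ℝ} (h0 : 0 < C) (h : ∀ x, dist (f x) x < C) : disp f < C :=
  (ContinuousMap.dist_lt_iff h0).2 h

lemma disp_symm (f : X ≃ₜ X) : disp f.symm = disp f := by
  have key : ∀ g : X ≃ₜ X, disp g.symm ≤ disp g := by
    intro g
    refine disp_le (disp_nonneg g) fun x => ?_
    have : dist (g.symm x) x = dist (g (g.symm x)) (g.symm x) := by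
      rw [g.apply_symm_apply, dist_comm]
    rw [this]
    exact dist_apply_le_disp g _
  refine le_antisymm (key f) ?_
  have := key f.symm
  rwa [Homeomorph.symm_symm] at this

lemma disp_mul_le (f g : X ≃ₜ X) : disp (f * g) ≤ disp f + disp g := by
  refine disp_le (add_nonneg (disp_nonneg f) (disp_nonneg g)) fun x => ?_
  calc dist (f (g x)) x ≤ dist (f (g x)) (g x) + dist (g x) x := dist_triangle _ _ _
  _ ≤ disp f + disp g := add_le_add (dist_apply_le_disp f _) (dist_apply_le_disp g _)

/-- key inequality for the covering argument -/
lemma disp_inv_mul_le (f g : X ≃ₜ X) :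
    disp (g⁻¹ * f) ≤ dist (cm g.symm) (cm f.symm) := by
  refine disp_le dist_nonneg fun x => ?_
  have : ((g⁻¹ * f) : X ≃ₜ X) x = g.symm (f x) := rfl
  rw [this]
  have hx : x = f.symm (f x) := (f.symm_apply_apply x).symm
  nth_rewrite 2 [hx]
  exact ContinuousMap.dist_apply_le_dist (f := cm g.symm) (g := cm f.symm) (f x)

lemma iSup_dist_eq_disp [Nonempty X] (f : X ≃ₜ X) : (⨆ z : X, dist (f z) z) = disp f := by
  have hb : BddAbove (Set.range fun z : X => dist (f z) z) :=
    ⟨disp f, by rintro r ⟨z, rfl⟩; exact dist_apply_le_disp f z⟩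
  refine le_antisymm (ciSup_le fun z => dist_apply_le_disp f z) ?_
  refine disp_le ?_ fun x => le_ciSup hb x
  obtain ⟨z⟩ := (inferInstance : Nonempty X)
  exact le_trans dist_nonneg (le_ciSup hb z)



section BPpart
variable {Z' : Type*}




variable {Z : Type*} [TopologicalSpace Z]

lemma isMeagre_biUnion {ι : Type*} {S : Set ι} (hS : S.Countable) {f : ι → Set Z}
    (h : ∀ i ∈ S, IsMeagre (f i)) : IsMeagre (⋃ i ∈ S, f i) := by
  rw [IsMeagre, compl_iUnion₂]
  exact (countable_bInter_mem hS).2 h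

lemma isMeagre_iUnion' {ι : Type*} [Countable ι] {f : ι → Set Z}
    (h : ∀ i, IsMeagre (f i)) : IsMeagre (⋃ i, f i) := by
  rw [IsMeagre, compl_iUnion]
  exact countable_iInter_mem.2 h

lemma isMeagre_union {s t : Set Z} (hs : IsMeagre s) (ht : IsMeagre t) : IsMeagre (s ∪ t) := by
  rw [IsMeagre, compl_union]
  exact (residual Z).inter_sets hs ht

lemma meager_of_eventuallyEq {s t : Set Z} (h : s =ᵇ t) : IsMeagre (s \ t) := by
  rw [eventuallyEq_set] at h
  rw [IsMeagre]
  filter_upwards [h] with x hx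
  intro hst
  exact hst.2 (hx.1 hst.1)

lemma eventuallyEq_of_meager_diffs {s t : Set Z} (h1 : IsMeagre (s \ t)) (h2 : IsMeagre (t \ s)) :
    s =ᵇ t := by
  rw [eventuallyEq_set]
  filter_upwards [h1, h2] with x hx1 hx2
  constructor
  · intro hs; by_contra ht; exact hx1 ⟨hs, ht⟩
  · intro ht; by_contra hs; exact hx2 ⟨ht, hs⟩

/-- Baire hull: every set is contained in a Baire measurable set such that
every Baire measurable subset of the difference is meager. -/
lemma exists_baire_hull [SecondCountableTopology Z] (A : Set Z) :
    ∃ H : Set Z, A ⊆ H ∧ BaireMeasurableSet H ∧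
      ∀ W ⊆ H \ A, BaireMeasurableSet W → IsMeagre W := by
  classical
  set Fam : Set (Set Z) := {O ∈ countableBasis Z | IsMeagre (A ∩ O)} with hFam
  set U : Set Z := ⋃₀ Fam with hU
  have hUopen : IsOpen U :=
    isOpen_sUnion fun O hO => isOpen_of_mem_countableBasis hO.1
  have hmeag : IsMeagre (A ∩ U) := by
    have : A ∩ U ⊆ ⋃ O ∈ Fam, (A ∩ O) := by
      rintro x ⟨hxA, hxU⟩
      rcases hxU with ⟨O, hO, hxO⟩
      exact mem_biUnion hO ⟨hxA, hxO⟩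
    exact (isMeagre_biUnion ((countable_countableBasis Z).mono fun O hO => hO.1)
      fun O hO => hO.2).mono this
  refine ⟨(A ∩ U) ∪ Uᶜ, ?_, ?_, ?_⟩
  · intro x hx
    by_cases hxU : x ∈ U
    · exact Or.inl ⟨hx, hxU⟩
    · exact Or.inr hxU
  · exact (hmeag.baireMeasurableSet).union (hUopen.baireMeasurableSet.compl)
  · intro W hWsub hWbp
    by_contra hW
    obtain ⟨V, hVopen, hWV⟩ := hWbp.residualEq_isOpen
    have hWV1 : IsMeagre (W \ V) := meager_of_eventuallyEq hWV
    have hWV2 : IsMeagre (V \ W) := meager_of_eventuallyEq hWV.symm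
    have hWA : W ∩ A = ∅ := by
      ext x; simp only [mem_inter_iff, mem_empty_iff_false, iff_false, not_and]
      intro hxW hxA; exact (hWsub hxW).2 hxA
    have hAV : IsMeagre (A ∩ V) := by
      refine hWV2.mono ?_
      rintro x ⟨hxA, hxV⟩
      refine ⟨hxV, fun hxW => ?_⟩
      have : x ∈ W ∩ A := ⟨hxW, hxA⟩
      rw [hWA] at this; exact this
    have hVU : V ⊆ U := by
      intro x hxV
      obtain ⟨O, hObasis, hxO, hOV⟩ :=
        (isBasis_countableBasis Z).exists_subset_of_mem_open hxV hVopen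
      exact ⟨O, ⟨hObasis, hAV.mono (show A ∩ O ⊆ A ∩ V from fun y hy => ⟨hy.1, hOV hy.2⟩)⟩, hxO⟩
    have hWmeag : IsMeagre W := by
      have hWVsub : W ∩ V ⊆ A ∩ V := by
        rintro x ⟨hxW, hxV⟩
        rcases hWsub hxW with ⟨hxH, -⟩
        rcases hxH with h | h
        · exact ⟨h.1, hxV⟩
        · exact absurd (hVU hxV) h
      have : W ⊆ (W \ V) ∪ (A ∩ V) := by
        intro x hx
        by_cases hxV : x ∈ V
        · exact Or.inr (hWVsub ⟨hx, hxV⟩)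
        · exact Or.inl ⟨hx, hxV⟩
      exact (isMeagre_union hWV1 hAV).mono this
    exact hW hWmeag


section Scheme
variable {Y : Type*} [MetricSpace Y]

/-- Suslin scheme of closed pieces refining a closed set. -/
def scheme (C : Set Y) (d : ℕ → Y) : List ℕ → Set Y
  | [] => C
  | (i :: s) => scheme C d s ∩ closedBall (d i) ((2:ℝ)⁻¹ ^ s.length)

variable {C : Set Y} {d : ℕ → Y}

lemma scheme_nil : scheme C d [] = C := rfl

lemma scheme_cons (i : ℕ) (s : List ℕ) :
    scheme C d (i :: s) = scheme C d s ∩ closedBall (d i) ((2:ℝ)⁻¹ ^ s.length) := rfl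

lemma scheme_isClosed (hC : IsClosed C) : ∀ s : List ℕ, IsClosed (scheme C d s)
  | [] => hC
  | (_ :: s) => (scheme_isClosed hC s).inter Metric.isClosed_closedBall

lemma scheme_subset_of_cons (i : ℕ) (s : List ℕ) : scheme C d (i :: s) ⊆ scheme C d s :=
  inter_subset_left

lemma scheme_cover (hd : DenseRange d) (s : List ℕ) :
    scheme C d s = ⋃ i, scheme C d (i :: s) := by
  apply Subset.antisymm
  · intro p hp
    obtain ⟨i, hi⟩ := hd.exists_dist_lt p (by positivity : (0:ℝ) < (2:ℝ)⁻¹ ^ s.length)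
    exact mem_iUnion.2 ⟨i, hp, by rw [mem_closedBall, dist_comm] at *; exact le_of_lt hi⟩
  · exact iUnion_subset fun i => scheme_subset_of_cons i s

end Scheme

section Hulls
variable {Z : Type*} [TopologicalSpace Z]

/-- Nested intersections of Baire hulls and closures along a scheme. -/
def hulls (Hl As : List ℕ → Set Z) : List ℕ → Set Z
  | [] => Hl [] ∩ closure (As [])
  | (i :: s) => hulls Hl As s ∩ (Hl (i :: s) ∩ closure (As (i :: s)))

variable {Hl As : List ℕ → Set Z}

lemma hulls_subset : ∀ s : List ℕ, hulls Hl As s ⊆ Hl s ∩ closure (As s)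
  | [] => Subset.rfl
  | (_ :: _) => inter_subset_right

lemma hulls_subset_of_cons (i : ℕ) (s : List ℕ) : hulls Hl As (i :: s) ⊆ hulls Hl As s :=
  inter_subset_left

lemma subset_hulls (hmono : ∀ i s, As (i :: s) ⊆ As s) (hsub : ∀ s, As s ⊆ Hl s) :
    ∀ s : List ℕ, As s ⊆ hulls Hl As s
  | [] => subset_inter (hsub []) subset_closure
  | (i :: s) => by
    refine subset_inter (Subset.trans (hmono i s) (subset_hulls hmono hsub s))
      (subset_inter (hsub _) subset_closure)

lemma hulls_baireMeasurable (hbp : ∀ s, BaireMeasurableSet (Hl s)) :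
    ∀ s : List ℕ, BaireMeasurableSet (hulls Hl As s)
  | [] => (hbp []).inter ((isClosed_closure.isOpen_compl.baireMeasurableSet).of_compl)
  | (i :: s) => (hulls_baireMeasurable hbp s).inter
      ((hbp _).inter ((isClosed_closure.isOpen_compl.baireMeasurableSet).of_compl))

end Hulls

/-- Lusin–Sierpiński: the continuous image of a closed subset of a complete separable
metric space in a second-countable metric space is Baire measurable. -/
theorem baireMeasurableSet_image_of_isClosed
    {Y Z : Type*} [MetricSpace Y] [CompleteSpace Y] [SeparableSpace Y]
    [MetricSpace Z] [SecondCountableTopology Z]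
    {C : Set Y} (hC : IsClosed C) {F : Y → Z} (hF : Continuous F) :
    BaireMeasurableSet (F '' C) := by
  classical
  rcases C.eq_empty_or_nonempty with rfl | ⟨c₀, hc₀⟩
  · simp only [image_empty]
    exact isOpen_empty.baireMeasurableSet
  haveI : Nonempty Y := ⟨c₀⟩
  set d : ℕ → Y := denseSeq Y with hd_def
  have hd : DenseRange d := denseRange_denseSeq Y
  set As : List ℕ → Set Z := fun s => F '' scheme C d s with hAs
  obtain ⟨Hl, hHl⟩ : ∃ Hl : List ℕ → Set Z, ∀ s, As s ⊆ Hl s ∧ BaireMeasurableSet (Hl s) ∧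
      ∀ W ⊆ Hl s \ As s, BaireMeasurableSet W → IsMeagre W := by
    choose Hl h1 h2 h3 using fun s => exists_baire_hull (As s)
    exact ⟨Hl, fun s => ⟨h1 s, h2 s, h3 s⟩⟩
  have hAs_mono : ∀ i s, As (i :: s) ⊆ As s := fun i s =>
    image_mono (scheme_subset_of_cons i s)
  have hAs_cover : ∀ s, As s = ⋃ i, As (i :: s) := by
    intro s
    rw [hAs]
    simp only
    rw [scheme_cover hd s, image_iUnion]
  have hhbp : ∀ s, BaireMeasurableSet (hulls Hl As s) :=
    hulls_baireMeasurable (fun s => (hHl s).2.1)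
  set M : Set Z := ⋃ s : List ℕ, (hulls Hl As s \ ⋃ i, hulls Hl As (i :: s)) with hM
  have hMmeag : IsMeagre M := by
    refine isMeagre_iUnion' fun s => ?_
    refine (hHl s).2.2 _ ?_ ((hhbp s).diff (BaireMeasurableSet.iUnion fun i => hhbp (i :: s)))
    rintro x ⟨hx1, hx2⟩
    refine ⟨(hulls_subset s hx1).1, fun hxA => hx2 ?_⟩
    rw [hAs_cover s] at hxA
    obtain ⟨i, hxi⟩ := mem_iUnion.1 hxA
    exact mem_iUnion.2 ⟨i, subset_hulls hAs_mono (fun s' => (hHl s').1) (i :: s) hxi⟩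
  -- the key inclusion
  have hbranch : hulls Hl As [] \ M ⊆ F '' C := by
    rintro x ⟨hx1, hxM⟩
    have step : ∀ s : List ℕ, x ∈ hulls Hl As s → ∃ i, x ∈ hulls Hl As (i :: s) := by
      intro s hs
      by_contra hcon
      push_neg at hcon
      exact hxM (mem_iUnion.2 ⟨s, hs, fun h => by
        obtain ⟨i, hi⟩ := mem_iUnion.1 h; exact hcon i hi⟩)
    let Sn : ℕ → {s : List ℕ // x ∈ hulls Hl As s} := fun n =>
      Nat.rec ⟨[], hx1⟩
        (fun _ ih => ⟨(step ih.1 ih.2).choose :: ih.1, (step ih.1 ih.2).choose_spec⟩) n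
    have Sn_succ : ∀ n, (Sn (n+1)).1 = (step (Sn n).1 (Sn n).2).choose :: (Sn n).1 :=
      fun n => rfl
    have Sn_len : ∀ n, (Sn n).1.length = n := by
      intro n; induction n with
      | zero => rfl
      | succ n ih => rw [Sn_succ n]; simp [ih]
    have Sn_nested : ∀ n m, n ≤ m → scheme C d (Sn m).1 ⊆ scheme C d (Sn n).1 := by
      intro n m hnm
      induction m with
      | zero => rw [Nat.le_zero.1 hnm]
      | succ m ih =>
        rcases Nat.lt_or_ge n (m+1) with h | h
        · refine Subset.trans ?_ (ih (Nat.lt_succ_iff.1 h))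
          rw [Sn_succ m]
          exact scheme_subset_of_cons _ _
        · rw [Nat.le_antisymm hnm h]
    -- choose approximating points
    have hclosure : ∀ n, x ∈ closure (As (Sn n).1) := fun n => (hulls_subset _ (Sn n).2).2
    have hpts : ∀ n : ℕ, ∃ p ∈ scheme C d (Sn n).1, dist x (F p) < (2:ℝ)⁻¹ ^ n := by
      intro n
      have := (Metric.mem_closure_iff.1 (hclosure n)) ((2:ℝ)⁻¹ ^ n) (by positivity)
      obtain ⟨b, hb1, hb2⟩ := this
      obtain ⟨p, hp, rfl⟩ := hb1
      exact ⟨p, hp, hb2⟩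
    choose p hp1 hp2 using hpts
    have hball : ∀ n, ∀ m, n + 1 ≤ m → p m ∈ closedBall (d ((step (Sn n).1 (Sn n).2).choose)) ((2:ℝ)⁻¹ ^ n) := by
      intro n m hm
      have h1 : p m ∈ scheme C d (Sn (n+1)).1 := Sn_nested (n+1) m hm (hp1 m)
      rw [Sn_succ n, scheme_cons] at h1
      rw [Sn_len n] at h1
      exact h1.2
    have hcauchy : CauchySeq p := by
      rw [Metric.cauchySeq_iff]
      intro ε hε
      obtain ⟨k, hk⟩ := exists_pow_lt_of_lt_one (by linarith : (0:ℝ) < ε / 2) (by norm_num : (2:ℝ)⁻¹ < 1)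
      refine ⟨k + 1, fun m hm m' hm' => ?_⟩
      have h1 := hball k m hm
      have h2 := hball k m' hm'
      rw [mem_closedBall] at h1 h2
      calc dist (p m) (p m') ≤ dist (p m) (d _) + dist (d _) (p m') := dist_triangle _ _ _
        _ ≤ (2:ℝ)⁻¹ ^ k + (2:ℝ)⁻¹ ^ k := add_le_add h1 (by rwa [dist_comm])
        _ < ε / 2 + ε / 2 := by linarith
        _ = ε := by ring
    obtain ⟨q, hq⟩ := cauchySeq_tendsto_of_complete hcauchy
    have hqC : q ∈ C := by
      have : ∀ m, p m ∈ C := fun m => by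
        have := Sn_nested 0 m (Nat.zero_le m) (hp1 m)
        exact this
      exact hC.mem_of_tendsto hq (Filter.Eventually.of_forall this)
    have hFq : F q = x := by
      have h1 : Filter.Tendsto (fun n => F (p n)) Filter.atTop (nhds (F q)) :=
        (hF.tendsto q).comp hq
      have h2 : Filter.Tendsto (fun n => F (p n)) Filter.atTop (nhds x) := by
        rw [tendsto_iff_dist_tendsto_zero]
        refine squeeze_zero (g := fun n => (2:ℝ)⁻¹ ^ n) (fun n => dist_nonneg)
          (fun n => le_of_lt (by rw [dist_comm]; exact hp2 n))
          (tendsto_pow_atTop_nhds_zero_of_lt_one (by norm_num) (by norm_num))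
      exact tendsto_nhds_unique h1 h2
    exact ⟨q, hqC, hFq⟩
  have himg_sub : F '' C ⊆ hulls Hl As [] :=
    subset_hulls hAs_mono (fun s => (hHl s).1) []
  refine (hhbp []).congr (eventuallyEq_of_meager_diffs ?_ ?_)
  · refine hMmeag.mono ?_
    rintro z ⟨hz1, hz2⟩
    by_contra hzM
    exact hz2 (hbranch ⟨hz1, hzM⟩)
  · refine IsMeagre.empty.mono ?_
    rintro z ⟨hz1, hz2⟩
    exact absurd (himg_sub hz1) hz2



end BPpart
section HomeoPart
variable {X : Type*} [MetricSpace X] [CompactSpace X]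

/-- The pair embedding of homeomorphisms. -/
noncomputable def Phi (f : X ≃ₜ X) : C(X,X) × C(X,X) := (cm f, cm f.symm)

/-- The orbit piece: points reachable from `z` by an element of `G` of displacement `< η`. -/
def orbS (G : Subgroup (X ≃ₜ X)) (η : ℝ) (z : X) : Set X :=
  {w | ∃ f : X ≃ₜ X, f ∈ G ∧ f z = w ∧ disp f < η}

variable {G : Subgroup (X ≃ₜ X)}

lemma phi_comp_id (f : X ≃ₜ X) : (Phi f).1.comp (Phi f).2 = ContinuousMap.id X :=
  ContinuousMap.ext fun x => f.apply_symm_apply x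

lemma phi_comp_id' (f : X ≃ₜ X) : (Phi f).2.comp (Phi f).1 = ContinuousMap.id X :=
  ContinuousMap.ext fun x => f.symm_apply_apply x

/-- If `G` is closed in the compact-open topology then its pair image is closed. -/
lemma isClosed_ghat {Fc : Set C(X,X)} (hFc : IsClosed Fc) (hFcG : cm ⁻¹' Fc = (G : Set (X ≃ₜ X))) :
    IsClosed (Phi '' (G : Set (X ≃ₜ X))) := by
  rw [← closure_subset_iff_isClosed]
  intro p hp
  -- p satisfies the two composition identities
  have hK : IsClosed {q : C(X,X) × C(X,X) | q.1.comp q.2 = ContinuousMap.id X ∧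
      q.2.comp q.1 = ContinuousMap.id X} := by
    have h1 : Continuous fun q : C(X,X) × C(X,X) => q.1.comp q.2 :=
      ContinuousMap.continuous_comp'.comp (continuous_snd.prodMk continuous_fst)
    have h2 : Continuous fun q : C(X,X) × C(X,X) => q.2.comp q.1 :=
      ContinuousMap.continuous_comp'.comp (continuous_fst.prodMk continuous_snd)
    exact (isClosed_singleton.preimage h1).inter (isClosed_singleton.preimage h2)
  have hpK : p.1.comp p.2 = ContinuousMap.id X ∧ p.2.comp p.1 = ContinuousMap.id X := by
    refine closure_minimal ?_ hK hp
    rintro q ⟨f, -, rfl⟩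
    exact ⟨phi_comp_id f, phi_comp_id' f⟩
  have hpF : p.1 ∈ Fc := by
    have h1 : p.1 ∈ closure (Prod.fst '' (Phi '' (G : Set (X ≃ₜ X)))) :=
      map_mem_closure continuous_fst hp fun q hq => mem_image_of_mem _ hq
    have h2 : Prod.fst '' (Phi '' (G : Set (X ≃ₜ X))) ⊆ Fc := by
      rintro q ⟨q', ⟨f, hf, rfl⟩, rfl⟩
      have : cm f ∈ Fc := by rw [← hFcG] at hf; exact hf
      exact this
    exact hFc.closure_subset_iff.2 h2 h1
  -- build the homeomorphism
  set h : X ≃ₜ X := ⟨⟨p.1, p.2, fun x => DFunLike.congr_fun hpK.2 x,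
    fun x => DFunLike.congr_fun hpK.1 x⟩, p.1.continuous, p.2.continuous⟩ with hh
  have hcm : cm h = p.1 := ContinuousMap.ext fun x => rfl
  refine ⟨h, ?_, ?_⟩
  · have hmem : h ∈ cm ⁻¹' Fc := by rw [Set.mem_preimage, hcm]; exact hpF
    rwa [hFcG] at hmem
  · exact Prod.ext hcm (ContinuousMap.ext fun x => rfl)

/-- The orbit piece is Baire measurable. -/
lemma baireMeasurable_orbS (hGhat : IsClosed (Phi '' (G : Set (X ≃ₜ X)))) (η : ℝ) (z : X) :
    BaireMeasurableSet (orbS G η z) := by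
  classical
  have key : orbS G η z =
      ⋃ n : ℕ, (fun p : C(X,X) × C(X,X) => p.1 z) ''
        ((Phi '' (G : Set (X ≃ₜ X))) ∩
          {p | dist p.1 (ContinuousMap.id X) ≤ η - (1 / (n + 1))}) := by
    ext w
    constructor
    · rintro ⟨f, hf, rfl, hdisp⟩
      obtain ⟨n, hn⟩ := exists_nat_one_div_lt (show 0 < η - disp f by linarith)
      refine mem_iUnion.2 ⟨n, ⟨Phi f, ⟨mem_image_of_mem _ hf, ?_⟩, rfl⟩⟩
      show dist (cm f) (ContinuousMap.id X) ≤ η - (1 / (n + 1))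
      have : (1 : ℝ) / (n + 1) < η - disp f := hn
      rw [show dist (cm f) (ContinuousMap.id X) = disp f from rfl]
      linarith
    · intro hw
      obtain ⟨n, p, ⟨⟨f, hf, rfl⟩, hdist⟩, rfl⟩ := mem_iUnion.1 hw
      refine ⟨f, hf, rfl, ?_⟩
      have h1 : (0:ℝ) < 1 / (n + 1) := by positivity
      calc disp f ≤ η - (1 / (n+1)) := hdist
        _ < η := by linarith
  rw [key]
  refine BaireMeasurableSet.iUnion fun n => ?_
  refine baireMeasurableSet_image_of_isClosed ?_ ?_
  · refine hGhat.inter ?_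
    have : Continuous fun p : C(X,X) × C(X,X) => dist p.1 (ContinuousMap.id X) :=
      (continuous_fst.dist continuous_const)
    exact isClosed_le this continuous_const
  · exact (continuous_eval_const z).comp continuous_fst

lemma not_isMeagre_of_isOpen [Nonempty X] {O : Set X} (hO : IsOpen O) (hne : O.Nonempty) :
    ¬ IsMeagre O := by
  intro hmeag
  have hd : Dense Oᶜ := dense_of_mem_residual hmeag
  obtain ⟨x, hx1, hx2⟩ := hd.exists_mem_open hO hne
  exact hx1 hx2

/-- The orbit piece is non-meager (uses transitivity and separability). -/
lemma not_isMeagre_orbS [Nonempty X] (htrans : ∀ x y : X, ∃ φ ∈ G, φ x = y)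
    {η : ℝ} (hη : 0 < η) (z : X) : ¬ IsMeagre (orbS G η z) := by
  classical
  intro hmeag
  -- countable dense subset of the pair image of G
  obtain ⟨T₀, hT₀c, hT₀d⟩ := exists_countable_dense (↥(Phi '' (G : Set (X ≃ₜ X))))
  -- covering of X by countably many homeomorphic images of the orbit piece
  have hcover : ∀ w : X, ∃ g : X ≃ₜ X, g ∈ G ∧ Phi g ∈ (Subtype.val '' T₀) ∧
      w ∈ ⇑g '' orbS G η z := by
    intro w
    obtain ⟨f, hf, hfz⟩ := htrans z w
    have hPf : Phi f ∈ Phi '' (G : Set (X ≃ₜ X)) := mem_image_of_mem _ hf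
    obtain ⟨t, ht, hdist⟩ := hT₀d.exists_dist_lt (⟨Phi f, hPf⟩ : ↥(Phi '' (G : Set (X ≃ₜ X)))) hη
    obtain ⟨g, hg, hPg⟩ := t.2
    refine ⟨g, hg, ⟨t, ht, hPg.symm⟩, ?_⟩
    have hdisp : disp (g⁻¹ * f) < η := by
      refine lt_of_le_of_lt (disp_inv_mul_le f g) ?_
      have h1 : dist (cm g.symm) (cm f.symm) = dist (Phi g).2 (Phi f).2 := rfl
      rw [h1, hPg]
      calc dist ((t : C(X,X) × C(X,X))).2 (Phi f).2 ≤ dist (t : C(X,X) × C(X,X)) (Phi f) := by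
            rw [Prod.dist_eq]; exact le_max_right _ _
        _ = dist (⟨Phi f, hPf⟩ : ↥(Phi '' (G : Set (X ≃ₜ X)))) t := by
            rw [Subtype.dist_eq, dist_comm]
        _ < η := hdist
    refine ⟨g.symm w, ⟨g⁻¹ * f, G.mul_mem (G.inv_mem hg) hf, ?_, hdisp⟩, g.apply_symm_apply w⟩
    show g.symm (f z) = g.symm w
    rw [hfz]
  -- hence X is meager, contradiction
  have huniv : (Set.univ : Set X) ⊆ ⋃ t ∈ (Subtype.val '' T₀), ⋃ g ∈ {g : X ≃ₜ X | Phi g = t},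
      ⇑g '' orbS G η z := by
    intro w _
    obtain ⟨g, hg, hgt, hw⟩ := hcover w
    exact mem_biUnion hgt (mem_biUnion rfl hw)
  have hmeagim : ∀ g : X ≃ₜ X, IsMeagre (⇑g '' orbS G η z) := by
    intro g
    have h1 : ⇑g '' orbS G η z = ⇑g.symm ⁻¹' orbS G η z := by
      ext w
      constructor
      · rintro ⟨u, hu, rfl⟩; simpa [g.symm_apply_apply] using hu
      · intro hw; exact ⟨g.symm w, hw, g.apply_symm_apply w⟩
    rw [h1]
    exact hmeag.preimage_of_isOpenMap g.symm.continuous g.symm.isOpenMap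
  have hPhi_inj : Function.Injective (Phi : (X ≃ₜ X) → C(X,X) × C(X,X)) := by
    intro f g h
    exact Homeomorph.ext fun x => DFunLike.congr_fun (congrArg Prod.fst h) x
  have : IsMeagre (Set.univ : Set X) := by
    refine IsMeagre.mono huniv ?_
    refine isMeagre_biUnion (hT₀c.image _) fun t ht => ?_
    refine isMeagre_biUnion ?_ fun g hg => hmeagim g
    exact Set.Subsingleton.countable fun a ha b hb => hPhi_inj (ha.trans hb.symm)
  have hd : Dense ((Set.univ : Set X)ᶜ) := dense_of_mem_residual this
  rw [Set.compl_univ] at hd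
  obtain ⟨x, hx⟩ := hd.nonempty
  exact hx

end HomeoPart

section Final
variable {X : Type*} [MetricSpace X] [CompactSpace X] {G : Subgroup (X ≃ₜ X)}

/-- Localization: around every point, the orbit piece is comeager in some neighborhood. -/
lemma orbS_localization [Nonempty X]
    (hGhat : IsClosed (Phi '' (G : Set (X ≃ₜ X))))
    (htrans : ∀ x y : X, ∃ φ ∈ G, φ x = y) {η : ℝ} (hη : 0 < η) (z : X) :
    ∃ N : Set X, IsOpen N ∧ z ∈ N ∧ IsMeagre (N \ orbS G (2*η) z) := by
  obtain ⟨O, hOopen, hOeq⟩ := (baireMeasurable_orbS hGhat η z).residualEq_isOpen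
  have hOS : IsMeagre (O \ orbS G η z) := meager_of_eventuallyEq hOeq.symm
  have hSO : IsMeagre (orbS G η z \ O) := meager_of_eventuallyEq hOeq
  have hOne : O.Nonempty := by
    rcases O.eq_empty_or_nonempty with rfl | h
    · exfalso
      refine not_isMeagre_orbS htrans hη z (hSO.mono (show orbS G η z ⊆ orbS G η z \ ∅ from fun w hw => ⟨hw, fun h => h⟩))
    · exact h
  have hSOne : (orbS G η z ∩ O).Nonempty := by
    by_contra hcon
    rw [Set.not_nonempty_iff_eq_empty] at hcon
    refine not_isMeagre_of_isOpen hOopen hOne (hOS.mono (show O ⊆ O \ orbS G η z from fun w hw => ⟨hw, fun hS => ?_⟩))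
    have : w ∈ orbS G η z ∩ O := ⟨hS, hw⟩
    rw [hcon] at this; exact this
  obtain ⟨p₀, ⟨f₀, hf₀G, hf₀z, hf₀d⟩, hp₀O⟩ := hSOne
  refine ⟨⇑f₀ ⁻¹' O, hOopen.preimage f₀.continuous,
    by rw [Set.mem_preimage, hf₀z]; exact hp₀O, ?_⟩
  have hsub : (⇑f₀ ⁻¹' O) \ orbS G (2*η) z ⊆ ⇑f₀ ⁻¹' (O \ orbS G η z) := by
    rintro w ⟨hw1, hw2⟩
    refine ⟨hw1, fun hS => hw2 ?_⟩
    obtain ⟨f, hfG, hfz, hfd⟩ := hS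
    refine ⟨f₀⁻¹ * f, G.mul_mem (G.inv_mem hf₀G) hfG, ?_, ?_⟩
    · show f₀.symm (f z) = w
      rw [hfz]; exact f₀.symm_apply_apply w
    · calc disp (f₀⁻¹ * f) ≤ disp f₀⁻¹ + disp f := disp_mul_le _ _
        _ = disp f₀ + disp f := by rw [inv_def, disp_symm]
        _ < 2*η := by linarith
  exact (hOS.preimage_of_isOpenMap f₀.continuous f₀.isOpenMap).mono hsub

end Final
end Stmt4Aux


/-- if a closed subgroup `G` of the homeomorphism group of a compact
metric space `X` (with the compact-open topology) acts transitively on `X`, then for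
every `ε > 0` there is `δ > 0` such that any two `δ`-close points are carried one to
the other by some `φ ∈ G` with `sup_z d(φ z, z) < ε`. -/
theorem stmt4 (X : Type*) [MetricSpace X] [CompactSpace X]
    (t : TopologicalSpace (X ≃ₜ X))
    (ht : t = TopologicalSpace.induced
      (fun f : X ≃ₜ X => (f : C(X, X))) ContinuousMap.compactOpen)
    (G : Subgroup (X ≃ₜ X)) (hG : @IsClosed _ t (G : Set (X ≃ₜ X)))
    (htrans : ∀ x y : X, ∃ φ ∈ G, φ x = y) :
    ∀ ε > (0 : ℝ), ∃ δ > (0 : ℝ), ∀ x y : X, dist x y < δ →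
      ∃ φ ∈ G, φ x = y ∧ (⨆ z : X, dist (φ z) z) < ε := by
  classical
  intro ε hε
  rcases isEmpty_or_nonempty X with hX | hX
  · exact ⟨1, one_pos, fun x => (IsEmpty.false x).elim⟩
  set η := ε / 9 with hη_def
  have hη : 0 < η := by positivity
  rw [ht] at hG
  obtain ⟨Fc, hFc, hFcG⟩ := isClosed_induced_iff.1 hG
  have hGhat : IsClosed (Stmt4Aux.Phi '' (G : Set (X ≃ₜ X))) :=
    Stmt4Aux.isClosed_ghat hFc hFcG
  have hloc := fun z : X => Stmt4Aux.orbS_localization hGhat htrans hη z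
  choose N hNopen hNmem hNmeag using hloc
  obtain ⟨δ, hδ, hball⟩ := lebesgue_number_lemma_of_metric (isCompact_univ (X := X))
    hNopen (fun z _ => Set.mem_iUnion.2 ⟨z, hNmem z⟩)
  refine ⟨δ, hδ, fun x y hxy => ?_⟩
  obtain ⟨z, hz⟩ := hball x (Set.mem_univ x)
  have hxN : x ∈ N z := hz (Metric.mem_ball_self hδ)
  have hyN : y ∈ N z := hz (by rw [Metric.mem_ball, dist_comm]; exact hxy)
  have key : ∀ a : X, a ∈ N z → (Stmt4Aux.orbS G (2*η) a ∩ Stmt4Aux.orbS G (2*η) z).Nonempty := by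
    intro a ha
    by_contra hcon
    rw [Set.not_nonempty_iff_eq_empty] at hcon
    refine Stmt4Aux.not_isMeagre_of_isOpen ((hNopen a).inter (hNopen z))
      ⟨a, hNmem a, ha⟩ ?_
    refine (Stmt4Aux.isMeagre_union (hNmeag a) (hNmeag z)).mono ?_
    rintro w ⟨hwa, hwz⟩
    by_cases h1 : w ∈ Stmt4Aux.orbS G (2*η) a
    · refine Or.inr ⟨hwz, fun h2 => ?_⟩
      have : w ∈ Stmt4Aux.orbS G (2*η) a ∩ Stmt4Aux.orbS G (2*η) z := ⟨h1, h2⟩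
      rw [hcon] at this; exact this
    · exact Or.inl ⟨hwa, h1⟩
  obtain ⟨q₁, ⟨v₁, hv₁G, hv₁, hv₁d⟩, ⟨w₁, hw₁G, hw₁, hw₁d⟩⟩ := key x hxN
  obtain ⟨q₂, ⟨v₂, hv₂G, hv₂, hv₂d⟩, ⟨w₂, hw₂G, hw₂, hw₂d⟩⟩ := key y hyN
  refine ⟨v₂⁻¹ * (w₂ * (w₁⁻¹ * v₁)), G.mul_mem (G.inv_mem hv₂G)
    (G.mul_mem hw₂G (G.mul_mem (G.inv_mem hw₁G) hv₁G)), ?_, ?_⟩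
  · show v₂.symm (w₂ (w₁.symm (v₁ x))) = y
    rw [hv₁, ← hw₁, w₁.symm_apply_apply, hw₂, ← hv₂, v₂.symm_apply_apply]
  · rw [Stmt4Aux.iSup_dist_eq_disp]
    have h1 : Stmt4Aux.disp (v₂⁻¹ * (w₂ * (w₁⁻¹ * v₁))) ≤
        Stmt4Aux.disp v₂ + (Stmt4Aux.disp w₂ + (Stmt4Aux.disp w₁ + Stmt4Aux.disp v₁)) := by
      calc Stmt4Aux.disp (v₂⁻¹ * (w₂ * (w₁⁻¹ * v₁)))
          ≤ Stmt4Aux.disp v₂⁻¹ + Stmt4Aux.disp (w₂ * (w₁⁻¹ * v₁)) := Stmt4Aux.disp_mul_le _ _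
        _ ≤ Stmt4Aux.disp v₂⁻¹ + (Stmt4Aux.disp w₂ + Stmt4Aux.disp (w₁⁻¹ * v₁)) := by
            have := Stmt4Aux.disp_mul_le w₂ (w₁⁻¹ * v₁); linarith
        _ ≤ Stmt4Aux.disp v₂⁻¹ + (Stmt4Aux.disp w₂ + (Stmt4Aux.disp w₁⁻¹ + Stmt4Aux.disp v₁)) := by
            have := Stmt4Aux.disp_mul_le w₁⁻¹ v₁; linarith
        _ = Stmt4Aux.disp v₂ + (Stmt4Aux.disp w₂ + (Stmt4Aux.disp w₁ + Stmt4Aux.disp v₁)) := by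
            rw [Stmt4Aux.inv_def, Stmt4Aux.inv_def, Stmt4Aux.disp_symm, Stmt4Aux.disp_symm]
    have : Stmt4Aux.disp v₂ + (Stmt4Aux.disp w₂ + (Stmt4Aux.disp w₁ + Stmt4Aux.disp v₁)) < ε := by
      rw [hη_def] at hv₁d hv₂d hw₁d hw₂d
      linarith
    linarith
end

section
/- Let p : E → B be a continuous surjection of topological spaces that admits no continuous global section, where B is a nonempty topological space. Then the countable product map p^ℕ : E^ℕ → B^ℕ, (e_i) ↦ (p(e_i)), admits no continuous local section: there is no nonempty open set U ⊂ B^ℕ and continuous s : U → E^ℕ with p^ℕ ∘ s = id_U. -/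
/-- if a continuous surjection `p : E → B` (with `B` nonempty) admits
no continuous global section, then the countable product map `E^ℕ → B^ℕ` admits no
continuous local section on any nonempty open subset of `B^ℕ`. -/
theorem stmt9 (E B : Type*) [TopologicalSpace E] [TopologicalSpace B] [Nonempty B]
    (p : E → B) (hc : Continuous p) (hs : Function.Surjective p)
    (hnosec : ¬ ∃ s : B → E, Continuous s ∧ ∀ b, p (s b) = b) :
    ¬ ∃ (U : Set (ℕ → B)) (s : U → ℕ → E), U.Nonempty ∧ IsOpen U ∧ Continuous s ∧
      ∀ u : U, (fun i => p (s u i)) = (u : ℕ → B) := by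
  rintro ⟨U, s, ⟨a, ha⟩, hUopen, hscont, hsec⟩
  obtain ⟨I, v, hv, hsub⟩ := (isOpen_pi_iff.mp hUopen) a ha
  obtain ⟨j, hj⟩ := I.exists_notMem
  have hmem : ∀ b : B, Function.update a j b ∈ U := by
    intro b
    apply hsub
    intro i hi
    rw [Function.update_of_ne (by rintro rfl; exact hj hi)]
    exact (hv i hi).2
  refine hnosec ⟨fun b => s ⟨Function.update a j b, hmem b⟩ j, ?_, ?_⟩
  · apply (continuous_apply j).comp
    apply hscont.comp
    apply Continuous.subtype_mk
    exact continuous_pi fun i => by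
      by_cases h : i = j
      · subst h; simpa using continuous_id'
      · simpa [Function.update_of_ne h] using continuous_const
  · intro b
    have := congrFun (hsec ⟨Function.update a j b, hmem b⟩) j
    simpa using this
end

section
/- The orbit map SO(3) → S², A ↦ A·e₃ (where e₃ is a fixed unit vector), admits no continuous global section. -/
open Complex Real


/-- A continuous real function taking values in `2πℤ` is constant. -/
lemma aux_const {u : ℝ → ℝ} (hu : Continuous u)
    (h : ∀ t, ∃ n : ℤ, u t = n * (2 * Real.pi)) (a b : ℝ) : u a = u b := by
  have key : ∀ c d : ℝ, u c ≤ u d → u d ≤ u c := by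
    intro c d hcd
    by_contra hlt
    push_neg at hlt
    obtain ⟨n, hn⟩ := h c
    obtain ⟨m, hm⟩ := h d
    have hπ := Real.pi_pos
    have hnm : n < m := by
      by_contra hge
      push_neg at hge
      have : (m : ℝ) ≤ n := by exact_mod_cast hge
      nlinarith
    have hn1 : (n : ℝ) + 1 ≤ m := by exact_mod_cast hnm
    have hmem : u c + Real.pi ∈ Set.uIcc (u c) (u d) := by
      rw [Set.mem_uIcc]
      left
      constructor <;> nlinarith
    obtain ⟨x, _, hx⟩ := intermediate_value_uIcc (f := u) (a := c) (b := d)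
      hu.continuousOn hmem
    obtain ⟨k, hk⟩ := h x
    rw [hk, hn] at hx
    have h2 : (2 * k : ℝ) = 2 * n + 1 := by nlinarith
    have h3 : (2 * k : ℤ) = 2 * n + 1 := by exact_mod_cast h2
    omega
  rcases le_total (u a) (u b) with hab | hab
  · exact le_antisymm hab (key _ _ hab)
  · exact (le_antisymm hab (key _ _ hab)).symm

lemma exp_eq_exp_real {x y : ℝ}
    (h : Complex.exp (x * I) = Complex.exp (y * I)) :
    ∃ n : ℤ, x = y + n * (2 * Real.pi) := by
  obtain ⟨n, hn⟩ := Complex.exp_eq_exp_iff_exists_int.mp h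
  refine ⟨n, ?_⟩
  have h2 : (x : ℂ) * I = ((y : ℂ) + (n : ℂ) * (2 * (Real.pi : ℂ))) * I := by
    rw [hn]; ring
  have h3 : (x : ℂ) = (y : ℂ) + (n : ℂ) * (2 * (Real.pi : ℂ)) :=
    mul_right_cancel₀ Complex.I_ne_zero h2
  exact_mod_cast h3


/-- clamp into the box `[0, 2π] × [-1, 1]`. -/
noncomputable def clampP (p : ℝ × ℝ) : ℝ × ℝ :=
  (max 0 (min (2 * Real.pi) p.1), max (-1) (min 1 p.2))

lemma continuous_clampP : Continuous clampP := by
  unfold clampP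
  fun_prop

lemma clampP_mem (p : ℝ × ℝ) :
    clampP p ∈ Set.Icc (0 : ℝ) (2 * Real.pi) ×ˢ Set.Icc (-1 : ℝ) 1 := by
  have hπ := Real.pi_pos
  constructor
  · constructor
    · exact le_max_left _ _
    · exact max_le (by linarith) (min_le_left _ _)
  · constructor
    · exact le_max_left _ _
    · exact max_le (by linarith) (min_le_left _ _)

/-- Lifting lemma: a continuous circle-valued map on the plane admits a continuous
logarithm after clamping into the box. -/
lemma lift_lemma (g : ℝ × ℝ → ℂ) (hg : Continuous g)
    (habs : ∀ p, ‖g p‖ = 1) :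
    ∃ G : ℝ × ℝ → ℝ, Continuous G ∧
      ∀ p, Complex.exp ((G p : ℂ) * I) = g (clampP p) := by
  have hne : ∀ p, g p ≠ 0 := by
    intro p hp
    have := habs p
    rw [hp] at this
    simp at this
  -- uniform continuity on the compact set [0,1] × box
  set C : Set (ℝ × ℝ) := Set.Icc (0 : ℝ) (2 * Real.pi) ×ˢ Set.Icc (-1 : ℝ) 1 with hC
  have hCcomp : IsCompact C := isCompact_Icc.prod isCompact_Icc
  set S : Set (ℝ × (ℝ × ℝ)) := Set.Icc (0 : ℝ) 1 ×ˢ C with hS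
  have hScomp : IsCompact S := isCompact_Icc.prod hCcomp
  set Φ : ℝ × (ℝ × ℝ) → ℂ := fun q => g (q.1 • q.2) with hΦdef
  have hΦ : Continuous Φ := hg.comp (continuous_fst.smul continuous_snd)
  have hucont := hScomp.uniformContinuousOn_of_continuous hΦ.continuousOn
  rw [Metric.uniformContinuousOn_iff] at hucont
  obtain ⟨δ, hδ, hd⟩ := hucont 2 (by norm_num)
  obtain ⟨n₀, hn₀⟩ := exists_nat_one_div_lt hδ
  set N : ℕ := n₀ + 1 with hNdef
  have hNpos : 0 < (N : ℝ) := by positivity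
  have hδN : (1 : ℝ) / N < δ := by exact_mod_cast hn₀
  -- the discrete homotopy stages
  set Ψ : ℕ → (ℝ × ℝ) → ℂ := fun k p => g ((((k : ℝ)) / N) • clampP p) with hΨdef
  have hΨcont : ∀ k, Continuous (Ψ k) :=
    fun k => hg.comp (continuous_clampP.const_smul (((k : ℝ)) / N))
  have hΨne : ∀ k p, Ψ k p ≠ 0 := fun k p => hne _
  have hΨabs : ∀ k p, ‖Ψ k p‖ = 1 := fun k p => habs _
  have hclose : ∀ k : ℕ, k < N → ∀ p, dist (Ψ (k + 1) p) (Ψ k p) < 2 := by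
    intro k hk p
    have hmem1 : (((k : ℝ) + 1) / N, clampP p) ∈ S := by
      refine ⟨⟨by positivity, ?_⟩, clampP_mem p⟩
      rw [div_le_one hNpos]
      exact_mod_cast hk
    have hmem2 : (((k : ℝ)) / N, clampP p) ∈ S := by
      refine ⟨⟨by positivity, ?_⟩, clampP_mem p⟩
      rw [div_le_one hNpos]
      exact_mod_cast Nat.le_of_lt hk
    have hdist : dist ((((k : ℝ) + 1) / N, clampP p) : ℝ × (ℝ × ℝ))
        (((k : ℝ) / N, clampP p)) < δ := by
      rw [Prod.dist_eq]
      simp only [dist_self]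
      rw [max_eq_left dist_nonneg]
      rw [Real.dist_eq]
      have : ((k : ℝ) + 1) / N - (k : ℝ) / N = 1 / N := by ring
      rw [this, abs_of_pos (by positivity)]
      exact hδN
    have := hd _ hmem1 _ hmem2 hdist
    simpa [hΦdef, hΨdef, Nat.cast_add, Nat.cast_one] using this
  -- recursive construction of the lift
  set Gk : ℕ → (ℝ × ℝ) → ℝ := fun k => Nat.rec (fun _ => Complex.arg (g 0))
    (fun k Gk => fun p => Gk p + Complex.arg (Ψ (k + 1) p / Ψ k p)) k with hGkdef
  have hinv : ∀ k : ℕ, k ≤ N → Continuous (Gk k) ∧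
      ∀ p, Complex.exp ((Gk k p : ℂ) * I) = Ψ k p := by
    intro k
    induction k with
    | zero =>
      intro _
      constructor
      · exact continuous_const
      · intro p
        have h0 : Ψ 0 p = g 0 := by
          simp [hΨdef]
        rw [h0]
        have := Complex.norm_mul_exp_arg_mul_I (g 0)
        rw [habs 0] at this
        simpa [hGkdef] using this
    | succ k ih =>
      intro hk1
      have hk : k < N := Nat.lt_of_succ_le hk1
      obtain ⟨ihc, ihe⟩ := ih (Nat.le_of_lt hk)
      -- the ratio map
      set r : (ℝ × ℝ) → ℂ := fun p => Ψ (k + 1) p / Ψ k p with hrdef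
      have hrabs : ∀ p, ‖r p‖ = 1 := by
        intro p
        simp [hrdef, map_div₀, hΨabs]
      have hrne : ∀ p, r p ≠ -1 := by
        intro p hp
        have h1 : Ψ (k + 1) p = -Ψ k p := by
          have := hΨne k p
          rw [hrdef, div_eq_iff this] at hp
          linear_combination hp
        have h2 := hclose k hk p
        rw [h1, dist_eq_norm] at h2
        have h3 : ‖-Ψ k p - Ψ k p‖ = 2 * ‖Ψ k p‖ := by
          rw [show -Ψ k p - Ψ k p = -(2 * Ψ k p) by ring]
          simp
        rw [h3, hΨabs] at h2
        norm_num at h2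
      have hrslit : ∀ p, r p ∈ Complex.slitPlane := by
        intro p
        rw [Complex.mem_slitPlane_iff]
        by_contra hcon
        push_neg at hcon
        obtain ⟨h1, h2⟩ := hcon
        -- r p has im = 0 and re ≤ 0 with abs 1, so r p = -1
        have habs1 := hrabs p
        have hre : (r p).re = -1 := by
          have := Complex.sq_norm (r p)
          rw [habs1] at this
          rw [Complex.normSq_apply, h2] at this
          have h3 : (r p).re ^ 2 = 1 := by nlinarith
          nlinarith [sq_nonneg ((r p).re + 1)]
        exact hrne p (Complex.ext hre (by simp [h2]))
      have hrcont : Continuous r :=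
        (hΨcont (k + 1)).div (hΨcont k) (hΨne k)
      have hargcont : Continuous fun p => Complex.arg (r p) := by
        rw [continuous_iff_continuousAt]
        intro p
        exact (Complex.continuousAt_arg (hrslit p)).comp hrcont.continuousAt
      constructor
      · exact ihc.add hargcont
      · intro p
        have hGk1 : Gk (k + 1) p = Gk k p + Complex.arg (r p) := rfl
        rw [hGk1]
        push_cast
        rw [add_mul, Complex.exp_add, ihe p]
        have hexp : Complex.exp ((Complex.arg (r p) : ℂ) * I) = r p := by
          have := Complex.norm_mul_exp_arg_mul_I (r p)
          rw [hrabs p] at this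
          simpa using this
        rw [hexp, hrdef]
        rw [mul_comm]
        exact div_mul_cancel₀ _ (hΨne k p)
  refine ⟨Gk N, (hinv N le_rfl).1, ?_⟩
  intro p
  rw [(hinv N le_rfl).2 p]
  have : ((N : ℝ)) / N = 1 := div_self (ne_of_gt hNpos)
  simp [hΨdef, this]

lemma complex_key (e c s w1 w2 : ℝ) (he : e ^ 2 = 1) :
    ((-w1 * s + w2 * c : ℝ) : ℂ) + (((w1 * c + w2 * s) * e : ℝ) : ℂ) * I
      = (((c : ℝ) : ℂ) + ((e * s : ℝ) : ℂ) * I) * (((w2 : ℝ) : ℂ) + ((e * w1 : ℝ) : ℂ) * I) := by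
  apply Complex.ext
  · simp only [Complex.add_re, Complex.add_im, Complex.mul_re, Complex.mul_im,
      Complex.ofReal_re, Complex.ofReal_im, Complex.I_re, Complex.I_im]
    linear_combination (w1 * s) * he
  · simp only [Complex.add_re, Complex.add_im, Complex.mul_re, Complex.mul_im,
      Complex.ofReal_re, Complex.ofReal_im, Complex.I_re, Complex.I_im]
    ring

/-- the orbit map `SO(3) → S²`, `A ↦ A · e₃`, admits no continuous
global section, i.e. there is no continuous `s : S² → SO(3)` with `s(x) · e₃ = x`
for all `x ∈ S²`. -/
theorem stmt10 :
    ¬ ∃ s : Metric.sphere (0 : EuclideanSpace ℝ (Fin 3)) 1 →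
        Matrix.specialOrthogonalGroup (Fin 3) ℝ,
      Continuous s ∧
        ∀ x : Metric.sphere (0 : EuclideanSpace ℝ (Fin 3)) 1,
          Matrix.mulVec ((s x : Matrix (Fin 3) (Fin 3) ℝ))
              ((WithLp.equiv 2 (Fin 3 → ℝ)) (EuclideanSpace.single (2 : Fin 3) (1 : ℝ)))
            = (WithLp.equiv 2 (Fin 3 → ℝ)) (x : EuclideanSpace ℝ (Fin 3)) := by
  rintro ⟨s, hs_cont, hs_sec⟩
  have hπ := Real.pi_pos
  -- third column of s x is x
  have hxcoord : ∀ (x : Metric.sphere (0 : EuclideanSpace ℝ (Fin 3)) 1) (j : Fin 3),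
      (s x : Matrix (Fin 3) (Fin 3) ℝ) j 2 = (x : EuclideanSpace ℝ (Fin 3)) j := by
    intro x j
    have h1 : (s x : Matrix (Fin 3) (Fin 3) ℝ).mulVec (Pi.single (2 : Fin 3) (1 : ℝ)) j
        = (x : EuclideanSpace ℝ (Fin 3)) j := congrFun (hs_sec x) j
    rw [Matrix.mulVec_single] at h1
    simpa using h1
  -- orthonormality of columns
  have hstar : ∀ x : Metric.sphere (0 : EuclideanSpace ℝ (Fin 3)) 1,
      ∀ i j : Fin 3, ∑ k, (s x : Matrix (Fin 3) (Fin 3) ℝ) k i *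
        (s x : Matrix (Fin 3) (Fin 3) ℝ) k j = if i = j then 1 else 0 := by
    intro x i j
    have hmem := (s x).2
    rw [Matrix.mem_specialOrthogonalGroup_iff] at hmem
    have h1 : star (s x : Matrix (Fin 3) (Fin 3) ℝ) * (s x : Matrix (Fin 3) (Fin 3) ℝ) = 1 :=
      (Matrix.mem_orthogonalGroup_iff' _ _).mp hmem.1
    have := congrFun (congrFun h1 i) j
    simpa [Matrix.mul_apply, Matrix.one_apply, Matrix.star_apply, mul_comm] using this
  have hcol : ∀ x : Metric.sphere (0 : EuclideanSpace ℝ (Fin 3)) 1,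
      ∑ k, (s x : Matrix (Fin 3) (Fin 3) ℝ) k 0 ^ 2 = 1 := by
    intro x
    have := hstar x 0 0
    simpa [sq] using this
  have horthcol : ∀ x : Metric.sphere (0 : EuclideanSpace ℝ (Fin 3)) 1,
      ∑ k, (s x : Matrix (Fin 3) (Fin 3) ℝ) k 0 * (x : EuclideanSpace ℝ (Fin 3)) k = 0 := by
    intro x
    have h1 := hstar x 0 2
    simp only [if_neg (by decide : ¬ (0 : Fin 3) = 2)] at h1
    rw [← h1]
    refine Finset.sum_congr rfl fun k _ => ?_
    rw [hxcoord x k]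
  -- continuity of first-column entries
  have hvcont : ∀ j : Fin 3,
      Continuous fun x : Metric.sphere (0 : EuclideanSpace ℝ (Fin 3)) 1 =>
        (s x : Matrix (Fin 3) (Fin 3) ℝ) j 0 :=
    fun j => (continuous_apply (0 : Fin 3)).comp
      ((continuous_apply j).comp (Continuous.subtype_val (p := fun A => A ∈ Matrix.specialOrthogonalGroup (Fin 3) ℝ) hs_cont))
  -- clamped latitude and radius
  set ch : ℝ → ℝ := fun t => max (-1) (min 1 t) with hch_def
  have hch_cont : Continuous ch := by fun_prop
  have hch_mem : ∀ t, -1 ≤ ch t ∧ ch t ≤ 1 := by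
    intro t
    exact ⟨le_max_left _ _, max_le (by norm_num) (min_le_left _ _)⟩
  have hch_one : ch 1 = 1 := by simp [hch_def]
  have hch_neg : ch (-1) = -1 := by simp [hch_def]
  set rr : ℝ → ℝ := fun t => Real.sqrt (1 - ch t ^ 2) with hrr_def
  have hrr_cont : Continuous rr := by
    apply Real.continuous_sqrt.comp
    fun_prop
  have hrr_sq : ∀ t, rr t ^ 2 = 1 - ch t ^ 2 := by
    intro t
    rw [hrr_def]
    apply Real.sq_sqrt
    nlinarith [hch_mem t]
  have hrr_one : rr 1 = 0 := by
    rw [hrr_def]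
    simp [hch_one]
  have hrr_neg : rr (-1) = 0 := by
    rw [hrr_def]
    simp [hch_neg]
  -- the latitude-longitude parametrization of the sphere
  set y : ℝ × ℝ → (Fin 3 → ℝ) :=
    fun p => ![rr p.2 * Real.cos p.1, rr p.2 * Real.sin p.1, ch p.2] with hy_def
  have hy_cont : Continuous y := by
    apply continuous_pi
    intro i
    fin_cases i
    · show Continuous fun p : ℝ × ℝ => rr p.2 * Real.cos p.1
      exact (hrr_cont.comp continuous_snd).mul (Real.continuous_cos.comp continuous_fst)
    · show Continuous fun p : ℝ × ℝ => rr p.2 * Real.sin p.1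
      exact (hrr_cont.comp continuous_snd).mul (Real.continuous_sin.comp continuous_fst)
    · show Continuous fun p : ℝ × ℝ => ch p.2
      exact hch_cont.comp continuous_snd
  have hy_norm : ∀ p, ∑ i, y p i ^ 2 = 1 := by
    intro p
    rw [hy_def]
    rw [Fin.sum_univ_three]
    simp only [Matrix.cons_val_zero, Matrix.cons_val_one, Matrix.head_cons,
      Matrix.cons_val_two, Matrix.tail_cons]
    nlinarith [hrr_sq p.2, Real.sin_sq_add_cos_sq p.1]
  set X : ℝ × ℝ → Metric.sphere (0 : EuclideanSpace ℝ (Fin 3)) 1 :=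
    fun p => ⟨(WithLp.equiv 2 (Fin 3 → ℝ)).symm (y p), by
      rw [mem_sphere_zero_iff_norm]
      rw [EuclideanSpace.norm_eq]
      have : ∀ i, ‖(WithLp.equiv 2 (Fin 3 → ℝ)).symm (y p) i‖ ^ 2 = y p i ^ 2 := by
        intro i
        rw [Real.norm_eq_abs, _root_.sq_abs]
        rfl
      rw [Finset.sum_congr rfl fun i _ => this i, hy_norm p]
      exact Real.sqrt_one⟩ with hX_def
  have hX_cont : Continuous X := by
    apply Continuous.subtype_mk
    exact (PiLp.continuous_toLp 2 (fun _ : Fin 3 => ℝ)).comp hy_cont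
  have hX_coord : ∀ p j, ((X p : EuclideanSpace ℝ (Fin 3))) j = y p j := fun p j => rfl
  -- the tangent field in coordinates
  set V : ℝ × ℝ → Fin 3 → ℝ := fun p j => (s (X p) : Matrix (Fin 3) (Fin 3) ℝ) j 0 with hV_def
  have hV_cont : ∀ j, Continuous fun p => V p j := fun j => (hvcont j).comp hX_cont
  have hV_norm : ∀ p, V p 0 ^ 2 + V p 1 ^ 2 + V p 2 ^ 2 = 1 := by
    intro p
    have := hcol (X p)
    rwa [Fin.sum_univ_three] at this
  have hV_orth : ∀ p, V p 0 * (rr p.2 * Real.cos p.1) + V p 1 * (rr p.2 * Real.sin p.1)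
      + V p 2 * ch p.2 = 0 := by
    intro p
    have h1 := horthcol (X p)
    rw [Fin.sum_univ_three] at h1
    rw [hX_coord p 0, hX_coord p 1, hX_coord p 2] at h1
    simpa [hy_def] using h1
  -- the frame-coordinates of the tangent field
  set a : ℝ × ℝ → ℝ := fun p => -V p 0 * Real.sin p.1 + V p 1 * Real.cos p.1 with ha_def
  set b : ℝ × ℝ → ℝ := fun p =>
    (V p 0 * Real.cos p.1 + V p 1 * Real.sin p.1) * ch p.2 - V p 2 * rr p.2 with hb_def
  have hab : ∀ p, a p ^ 2 + b p ^ 2 = 1 := by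
    intro p
    have h1 := hV_norm p
    have h2 := hV_orth p
    have h3 := hrr_sq p.2
    have h4 := Real.sin_sq_add_cos_sq p.1
    rw [ha_def, hb_def]
    simp only []
    linear_combination (V p 0 ^ 2 + V p 1 ^ 2) * h4 + h1
      + ((V p 0 * Real.cos p.1 + V p 1 * Real.sin p.1) ^ 2 + V p 2 ^ 2) * h3
      - (V p 0 * (rr p.2 * Real.cos p.1) + V p 1 * (rr p.2 * Real.sin p.1)
          + V p 2 * ch p.2) * h2
  set f : ℝ × ℝ → ℂ := fun p => (a p : ℂ) + (b p : ℂ) * I with hf_def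
  have hf_cont : Continuous f := by
    apply Continuous.add
    · exact Complex.continuous_ofReal.comp (by fun_prop)
    · exact (Complex.continuous_ofReal.comp (by fun_prop)).mul continuous_const
  have hf_re : ∀ p, (f p).re = a p := by intro p; simp [hf_def]
  have hf_im : ∀ p, (f p).im = b p := by intro p; simp [hf_def]
  have hf_abs : ∀ p, ‖f p‖ = 1 := by
    intro p
    have : ‖f p‖ ^ 2 = 1 := by
      rw [Complex.sq_norm, Complex.normSq_apply, hf_re, hf_im]
      linear_combination hab p
    nlinarith [norm_nonneg (f p)]
  -- lift the circle-valued map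
  obtain ⟨G, hG_cont, hG⟩ := lift_lemma f hf_cont hf_abs
  set cθ : ℝ → ℝ := fun t => max 0 (min (2 * Real.pi) t) with hcθ_def
  have hcθ_cont : Continuous cθ := by fun_prop
  have hcθ_zero : cθ 0 = 0 := by
    rw [hcθ_def]
    simp only []
    rw [min_eq_right (by linarith), max_self]
  have hcθ_two_pi : cθ (2 * Real.pi) = 2 * Real.pi := by
    rw [hcθ_def]
    simp only []
    rw [min_self, max_eq_right (by linarith)]
  have hclamp : ∀ p : ℝ × ℝ, clampP p = (cθ p.1, ch p.2) := fun p => rfl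
  have hG' : ∀ p : ℝ × ℝ, Complex.exp ((G p : ℂ) * I) = f (cθ p.1, ch p.2) := by
    intro p
    rw [hG p, hclamp]
  -- X only depends on the clamped latitude and is 2π-periodic in longitude
  have hXeq : ∀ p q : ℝ × ℝ, y p = y q → X p = X q := by
    intro p q hpq
    apply Subtype.ext
    show (WithLp.equiv 2 (Fin 3 → ℝ)).symm (y p) = (WithLp.equiv 2 (Fin 3 → ℝ)).symm (y q)
    rw [hpq]
  have hch_fix : ∀ t, -1 ≤ t → t ≤ 1 → ch t = t := by
    intro t h1 h2
    rw [hch_def]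
    simp only []
    rw [min_eq_right h2, max_eq_right h1]
  have hch_idem : ∀ t, ch (ch t) = ch t := fun t => hch_fix _ (hch_mem t).1 (hch_mem t).2
  have hrr_ch : ∀ t, rr (ch t) = rr t := by
    intro t
    rw [hrr_def]
    simp only []
    rw [hch_idem]
  -- f is 2π-periodic in the longitude
  have hVeq : ∀ p q : ℝ × ℝ, X p = X q → V p = V q := by
    intro p q hpq
    rw [hV_def]
    simp only [hpq]
  have hf_period : ∀ t, f (2 * Real.pi, t) = f (0, t) := by
    intro t
    have hX : X (2 * Real.pi, t) = X (0, t) := by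
      apply hXeq
      rw [hy_def]
      simp [Real.cos_two_pi, Real.sin_two_pi]
    have hV2 := hVeq _ _ hX
    rw [hf_def, ha_def, hb_def]
    simp only [hV2, Real.cos_two_pi, Real.sin_two_pi, Real.cos_zero, Real.sin_zero]
  -- the winding difference function
  set D : ℝ → ℝ := fun t => G (2 * Real.pi, t) - G (0, t) with hD_def
  have hD_cont : Continuous D := by
    apply Continuous.sub
    · exact hG_cont.comp (continuous_const.prodMk continuous_id)
    · exact hG_cont.comp (continuous_const.prodMk continuous_id)
  have hD_int : ∀ t, ∃ n : ℤ, D t = n * (2 * Real.pi) := by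
    intro t
    have h1 : Complex.exp ((G (2 * Real.pi, t) : ℂ) * I)
        = Complex.exp ((G (0, t) : ℂ) * I) := by
      rw [hG' (2 * Real.pi, t), hG' (0, t)]
      show f (cθ (2 * Real.pi), ch t) = f (cθ 0, ch t)
      rw [hcθ_two_pi, hcθ_zero]
      exact hf_period (ch t)
    obtain ⟨n, hn⟩ := exp_eq_exp_real h1
    exact ⟨n, by rw [hD_def]; simp only []; linarith⟩
  -- ======== the top and bottom rows (poles) ========
  have top_bot : ∀ ε : ℝ, ε = 1 ∨ ε = -1 → D ε = ε * (2 * Real.pi) := by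
    rintro ε hε
    have hε2 : ε ^ 2 = 1 := by rcases hε with h | h <;> rw [h] <;> norm_num
    have hchε : ch ε = ε := by
      rcases hε with h | h <;> rw [h] <;> [exact hch_one; exact hch_neg]
    have hrrε : rr ε = 0 := by
      rcases hε with h | h <;> rw [h] <;> [exact hrr_one; exact hrr_neg]
    have hXε : ∀ θ, X (θ, ε) = X (0, ε) := by
      intro θ
      apply hXeq
      rw [hy_def]
      simp only [hrrε]
      simp
    have hVε : ∀ θ, V (θ, ε) = V (0, ε) := fun θ => hVeq _ _ (hXε θ)
    have hV2ε : V (0, ε) 2 = 0 := by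
      have h0 := hV_orth (0, ε)
      rcases hε with h | h <;> subst h <;>
        simp only [hrrε, hchε] at h0 <;> simp at h0 <;> linarith [h0]
    set w1 : ℝ := V (0, ε) 0 with hw1_def
    set w2 : ℝ := V (0, ε) 1 with hw2_def
    have hw_norm : w1 ^ 2 + w2 ^ 2 = 1 := by
      have h0 := hV_norm (0, ε)
      rw [hV2ε] at h0
      rw [hw1_def, hw2_def]
      nlinarith [h0]
    set z₀ : ℂ := ((w2 : ℝ) : ℂ) + ((ε * w1 : ℝ) : ℂ) * I with hz₀_def
    have hz₀_abs : ‖z₀‖ = 1 := by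
      have h2 : ‖z₀‖ ^ 2 = 1 := by
        rw [Complex.sq_norm, hz₀_def, Complex.normSq_apply]
        simp only [Complex.add_re, Complex.ofReal_re, Complex.mul_re, Complex.I_re,
          Complex.ofReal_im, Complex.I_im, Complex.add_im, Complex.mul_im]
        linear_combination (w1 ^ 2) * hε2 + hw_norm
      nlinarith [norm_nonneg z₀]
    have hfε : ∀ θ : ℝ, f (θ, ε) = Complex.exp (((ε * θ : ℝ) : ℂ) * I) * z₀ := by
      intro θ
      have h1 : Complex.exp (((ε * θ : ℝ) : ℂ) * I)
          = ((Real.cos (ε * θ) : ℝ) : ℂ) + ((Real.sin (ε * θ) : ℝ) : ℂ) * I := by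
        rw [Complex.exp_mul_I]
        simp [Complex.ofReal_cos, Complex.ofReal_sin]
      have hcos : Real.cos (ε * θ) = Real.cos θ := by
        rcases hε with h | h <;> rw [h] <;> simp
      have hsin : Real.sin (ε * θ) = ε * Real.sin θ := by
        rcases hε with h | h <;> rw [h] <;> simp
      have ha' : a (θ, ε) = -w1 * Real.sin θ + w2 * Real.cos θ := by
        rw [ha_def]
        show -V (θ, ε) 0 * Real.sin θ + V (θ, ε) 1 * Real.cos θ = _
        rw [hVε θ, ← hw1_def, ← hw2_def]
      have hb' : b (θ, ε) = (w1 * Real.cos θ + w2 * Real.sin θ) * ε := by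
        rw [hb_def]
        show (V (θ, ε) 0 * Real.cos θ + V (θ, ε) 1 * Real.sin θ) * ch ε
            - V (θ, ε) 2 * rr ε = _
        rw [hVε θ, hchε, hrrε, hV2ε, ← hw1_def, ← hw2_def]
        ring
      have h2 : f (θ, ε) = ((a (θ, ε) : ℝ) : ℂ) + ((b (θ, ε) : ℝ) : ℂ) * I := by
        rw [hf_def]
      rw [h2, ha', hb', h1, hcos, hsin, hz₀_def]
      exact complex_key ε (Real.cos θ) (Real.sin θ) w1 w2 hε2
    -- the lift along the row advances by ε·2π
    set c₀ : ℝ := Complex.arg z₀ with hc₀_def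
    have hexpc₀ : Complex.exp ((c₀ : ℂ) * I) = z₀ := by
      have h0 := Complex.norm_mul_exp_arg_mul_I z₀
      rw [hz₀_abs] at h0
      simpa [hc₀_def] using h0
    set u : ℝ → ℝ := fun θ => G (θ, ε) - ε * cθ θ - c₀ with hu_def
    have hu_cont : Continuous u := by
      rw [hu_def]
      exact ((hG_cont.comp (continuous_id.prodMk continuous_const)).sub
        (continuous_const.mul hcθ_cont)).sub continuous_const
    have hu_int : ∀ θ, ∃ n : ℤ, u θ = n * (2 * Real.pi) := by
      intro θ
      have hGθ := hG' (θ, ε)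
      have hGθ' : Complex.exp ((G (θ, ε) : ℂ) * I) = f (cθ θ, ch ε) := hGθ
      rw [hchε, hfε (cθ θ)] at hGθ'
      have h1 : Complex.exp ((G (θ, ε) : ℂ) * I)
          = Complex.exp (((ε * cθ θ + c₀ : ℝ) : ℂ) * I) := by
        rw [hGθ', ← hexpc₀, ← Complex.exp_add]
        congr 1
        push_cast
        ring
      obtain ⟨n, hn⟩ := exp_eq_exp_real h1
      refine ⟨n, ?_⟩
      rw [hu_def]
      simp only []
      linarith
    have hconst := aux_const hu_cont hu_int (2 * Real.pi) 0
    rw [hu_def] at hconst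
    simp only [] at hconst
    rw [hcθ_two_pi, hcθ_zero] at hconst
    rw [hD_def]
    simp only []
    linarith
  have h1 := top_bot 1 (Or.inl rfl)
  have h2 := top_bot (-1) (Or.inr rfl)
  have h3 := aux_const hD_cont hD_int 1 (-1)
  rw [h1, h2] at h3
  nlinarith [hπ, h3]
end
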